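/- In S = (IO∞(ℤ))ⁿ, every congruence 𝔠 with Δ ⊆ 𝔠 ⊆ σ_[i] for some i ∈ {1,…,n} (where Δ is the identity congruence) satisfies 𝔠 = Δ or 𝔠 = σ_[i]; i.e., σ_[i] covers the identity congruence in the congruence lattice. -/

import Mathlib

/-- A partial injective self-map of ℤ (encoded as a `PEquiv`) is monotone. -/
def PMono (f : ℤ ≃. ℤ) : Prop :=
  ∀ x y a b : ℤ, a ∈ f x → b ∈ f y → x ≤ y → a ≤ b

/-- Domain of a partial injective self-map of ℤ. -/
def PDom (f : ℤ ≃. ℤ) : Set ℤ := {x | (f x).isSome}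

/-- Range of a partial injective self-map of ℤ. -/
def PRan (f : ℤ ≃. ℤ) : Set ℤ := {y | (f.symm y).isSome}

/-- Membership in IO∞(ℤ): injective (built into `PEquiv`), monotone,
with cofinite domain and cofinite range. -/
def IOZ (f : ℤ ≃. ℤ) : Prop :=
  PMono f ∧ (PDom f)ᶜ.Finite ∧ (PRan f)ᶜ.Finite

/-- Idempotent element of IO∞(ℤ). -/
def IsIdem (ε : ℤ ≃. ℤ) : Prop := ε.trans ε = ε

/-- Membership in the direct power (IO∞(ℤ))ⁿ. -/
def IOZn (n : ℕ) (α : Fin n → ℤ ≃. ℤ) : Prop := ∀ i, IOZ (α i)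

/-- Coordinatewise composition on the direct power (α then β, as in the paper). -/
def mulN {n : ℕ} (α β : Fin n → ℤ ≃. ℤ) : Fin n → ℤ ≃. ℤ := fun i => (α i).trans (β i)

/-- The identity 𝕀 of (IO∞(ℤ))ⁿ. -/
def oneN (n : ℕ) : Fin n → ℤ ≃. ℤ := fun _ => PEquiv.refl ℤ

/-- εᵢ°: the tuple with ε in coordinate i and identities elsewhere. -/
def epsT {n : ℕ} (i : Fin n) (ε : ℤ ≃. ℤ) : Fin n → ℤ ≃. ℤ :=
  fun j => if j = i then ε else PEquiv.refl ℤ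

/-- A congruence on the semigroup (IO∞(ℤ))ⁿ (relative to the carrier `IOZn n`). -/
def IsCongOn (n : ℕ) (ρ : (Fin n → ℤ ≃. ℤ) → (Fin n → ℤ ≃. ℤ) → Prop) : Prop :=
  (∀ α, IOZn n α → ρ α α) ∧
  (∀ α β, IOZn n α → IOZn n β → ρ α β → ρ β α) ∧
  (∀ α β γ, IOZn n α → IOZn n β → IOZn n γ → ρ α β → ρ β γ → ρ α γ) ∧
  (∀ α β γ, IOZn n α → IOZn n β → IOZn n γ → ρ α β →
    ρ (mulN α γ) (mulN β γ) ∧ ρ (mulN γ α) (mulN γ β))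

/-- The congruence σ_[i]. -/
def sigmaI (n : ℕ) (i : Fin n) (α β : Fin n → ℤ ≃. ℤ) : Prop :=
  ∃ ε : ℤ ≃. ℤ, IOZ ε ∧ IsIdem ε ∧ mulN α (epsT i ε) = mulN β (epsT i ε)

/-- D(α,β): the set of coordinates where α and β differ. -/
def Dset {n : ℕ} (α β : Fin n → ℤ ≃. ℤ) : Set (Fin n) := {i | α i ≠ β i}

/-- Idempotent tuple. -/
def IsIdemN {n : ℕ} (ε : Fin n → ℤ ≃. ℤ) : Prop := ∀ i, (ε i).trans (ε i) = ε i

/-- σ_[i₁,…,i_k] for the set of indices t: α and β agree after right multiplication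
by a product ε°_{i₁}⋯ε°_{i_k} of idempotents supported on t. -/
def sigmaSet (n : ℕ) (t : Finset (Fin n)) (α β : Fin n → ℤ ≃. ℤ) : Prop :=
  ∃ ε : Fin n → ℤ ≃. ℤ, IOZn n ε ∧ IsIdemN ε ∧ (∀ i ∉ t, ε i = PEquiv.refl ℤ) ∧
    mulN α ε = mulN β ε

open PEquiv Option

section Infra

lemma trans_apply' (f g : ℤ ≃. ℤ) (x : ℤ) : f.trans g x = (f x).bind g := rfl

lemma peq_inj {f : ℤ ≃. ℤ} {x y a : ℤ} (h1 : f x = some a) (h2 : f y = some a) : x = y := by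
  rw [← PEquiv.eq_some_iff] at h1 h2
  rw [h1] at h2
  exact Option.some_injective _ h2

lemma pmono_strict {f : ℤ ≃. ℤ} (hf : PMono f) {x y a b : ℤ}
    (ha : f x = some a) (hb : f y = some b) (hxy : x < y) : a < b := by
  refine lt_of_le_of_ne (hf x y a b ha hb hxy.le) ?_
  rintro rfl
  exact absurd (peq_inj ha hb) hxy.ne

lemma pmono_symm {f : ℤ ≃. ℤ} (hf : PMono f) : PMono f.symm := by
  intro x y a b ha hb hxy
  rw [Option.mem_def, PEquiv.eq_some_iff] at ha hb
  by_contra hab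
  push_neg at hab
  exact absurd (pmono_strict hf hb ha hab) (by omega)

lemma pmono_trans {f g : ℤ ≃. ℤ} (hf : PMono f) (hg : PMono g) : PMono (f.trans g) := by
  intro x y a b ha hb hxy
  rw [Option.mem_def, PEquiv.trans_eq_some] at ha hb
  obtain ⟨c, hc1, hc2⟩ := ha
  obtain ⟨d, hd1, hd2⟩ := hb
  exact hg c d a b hc2 hd2 (hf x y c d hc1 hd1 hxy)

lemma finite_preimage (f : ℤ ≃. ℤ) {T : Set ℤ} (hT : T.Finite) :
    {x : ℤ | ∃ y ∈ T, f x = some y}.Finite := by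
  have hsub : {x : ℤ | ∃ y ∈ T, f x = some y} ⊆ ⋃ y ∈ T, {x | f.symm y = some x} := by
    intro x ⟨y, hy, hxy⟩
    refine Set.mem_biUnion hy ?_
    rw [Set.mem_setOf_eq, PEquiv.eq_some_iff]
    exact hxy
  refine Set.Finite.subset (Set.Finite.biUnion hT fun y _ => ?_) hsub
  apply Set.Subsingleton.finite
  intro a ha b hb
  exact Option.some_injective _ (ha.symm.trans hb)

lemma ioz_symm {f : ℤ ≃. ℤ} (hf : IOZ f) : IOZ f.symm :=
  ⟨pmono_symm hf.1, hf.2.2, hf.2.1⟩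

lemma pdom_trans_cofinite {f g : ℤ ≃. ℤ} (hf : (PDom f)ᶜ.Finite) (hg : (PDom g)ᶜ.Finite) :
    (PDom (f.trans g))ᶜ.Finite := by
  refine Set.Finite.subset (hf.union (finite_preimage f hg)) ?_
  intro x hx
  simp only [PDom, Set.mem_compl_iff, Set.mem_setOf_eq, Option.not_isSome_iff_eq_none] at hx
  rw [trans_apply'] at hx
  cases hfx : f x with
  | none => exact Or.inl (by simp [PDom, hfx])
  | some y =>
    rw [hfx] at hx
    simp only [Option.bind_some] at hx
    exact Or.inr ⟨y, by simp [PDom, hx], hfx⟩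

lemma ioz_trans {f g : ℤ ≃. ℤ} (hf : IOZ f) (hg : IOZ g) : IOZ (f.trans g) := by
  refine ⟨pmono_trans hf.1 hg.1, pdom_trans_cofinite hf.2.1 hg.2.1, ?_⟩
  have h : PRan (f.trans g) = PDom ((f.trans g).symm) := rfl
  rw [h, PEquiv.symm_trans_rev]
  exact pdom_trans_cofinite hg.2.2 hf.2.2

lemma ioz_refl : IOZ (PEquiv.refl ℤ) := by
  refine ⟨?_, ?_, ?_⟩
  · intro x y a b ha hb hxy
    simp only [Option.mem_def, PEquiv.refl_apply, Option.some.injEq] at ha hb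
    omega
  · convert Set.finite_empty
    rw [Set.eq_empty_iff_forall_notMem]
    intro x hx
    exact hx (by simp [PDom])
  · convert Set.finite_empty
    rw [Set.eq_empty_iff_forall_notMem]
    intro x hx
    exact hx (by simp [PRan])

end Infra
section Pid

/-- Partial identity on a set, with classical decidability. -/
noncomputable def pid (s : Set ℤ) : ℤ ≃. ℤ :=
  @PEquiv.ofSet ℤ s (fun _ => Classical.propDecidable _)

lemma pid_apply_mem {s : Set ℤ} {x : ℤ} (h : x ∈ s) : pid s x = some x := by
  simp only [pid, PEquiv.ofSet, PEquiv.coe_mk_apply]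
  exact if_pos h

lemma pid_apply_not_mem {s : Set ℤ} {x : ℤ} (h : x ∉ s) : pid s x = none := by
  simp only [pid, PEquiv.ofSet, PEquiv.coe_mk_apply]
  exact if_neg h

lemma pid_eq_some_iff {s : Set ℤ} {x y : ℤ} : pid s x = some y ↔ y = x ∧ x ∈ s := by
  by_cases h : x ∈ s
  · rw [pid_apply_mem h]
    simp [eq_comm, h]
  · rw [pid_apply_not_mem h]
    simp [h]

lemma pid_symm (s : Set ℤ) : (pid s).symm = pid s := rfl

lemma pdom_pid (s : Set ℤ) : PDom (pid s) = s := by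
  ext x
  simp only [PDom, Set.mem_setOf_eq]
  by_cases h : x ∈ s
  · simp [pid_apply_mem h, h]
  · simp [pid_apply_not_mem h, h]

lemma ioz_pid {s : Set ℤ} (hs : sᶜ.Finite) : IOZ (pid s) := by
  refine ⟨?_, ?_, ?_⟩
  · intro x y a b ha hb hxy
    rw [Option.mem_def, pid_eq_some_iff] at ha hb
    omega
  · rwa [pdom_pid]
  · have h : PRan (pid s) = PDom ((pid s).symm) := rfl
    rwa [h, pid_symm, pdom_pid]

lemma pid_trans_pid (s t : Set ℤ) : (pid s).trans (pid t) = pid (s ∩ t) := by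
  ext x
  rw [trans_apply']
  by_cases h1 : x ∈ s
  · rw [pid_apply_mem h1, Option.bind_some]
    by_cases h2 : x ∈ t
    · rw [pid_apply_mem h2, pid_apply_mem (Set.mem_inter h1 h2)]
    · rw [pid_apply_not_mem h2, pid_apply_not_mem (fun h => h2 h.2)]
  · rw [pid_apply_not_mem h1, Option.bind_none,
      pid_apply_not_mem (fun h => h1 h.1)]

lemma pid_univ : pid Set.univ = PEquiv.refl ℤ := by
  ext x
  rw [pid_apply_mem (Set.mem_univ x)]
  rfl

lemma isIdem_pid (s : Set ℤ) : IsIdem (pid s) := by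
  rw [IsIdem, pid_trans_pid, Set.inter_self]

lemma isIdem_fix {ε : ℤ ≃. ℤ} (h : IsIdem ε) {x y : ℤ} (hx : ε x = some y) : y = x := by
  have h2 : ε.trans ε x = ε x := by rw [h]
  rw [trans_apply', hx, Option.bind_some] at h2
  exact (peq_inj hx h2).symm

lemma isIdem_eq_pid {ε : ℤ ≃. ℤ} (h : IsIdem ε) : ε = pid (PDom ε) := by
  ext x
  cases hx : ε x with
  | none =>
    rw [pid_apply_not_mem]
    intro hmem
    rw [PDom, Set.mem_setOf_eq, hx] at hmem
    simp at hmem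
  | some y =>
    obtain rfl := isIdem_fix h hx
    rw [pid_apply_mem]
    rw [PDom, Set.mem_setOf_eq, hx]
    rfl

end Pid
section PInj

open Classical in
/-- A total injective map as a `PEquiv`. -/
noncomputable def pInj (φ : ℤ → ℤ) (hφ : Function.Injective φ) : ℤ ≃. ℤ where
  toFun x := some (φ x)
  invFun y := if h : ∃ x, φ x = y then some h.choose else none
  inv a b := by
    constructor
    · intro ha
      split_ifs at ha with h
      · obtain rfl := Option.some_injective _ ha
        rw [h.choose_spec]
    · intro hb
      simp only [Option.mem_def, Option.some.injEq] at hb ⊢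
      obtain rfl := hb
      have h : ∃ x, φ x = φ a := ⟨a, rfl⟩
      rw [dif_pos h]
      exact congrArg some (hφ h.choose_spec)

lemma pInj_apply (φ : ℤ → ℤ) (hφ : Function.Injective φ) (x : ℤ) :
    pInj φ hφ x = some (φ x) := rfl

lemma pInj_eq_some_iff {φ : ℤ → ℤ} {hφ : Function.Injective φ} {x y : ℤ} :
    pInj φ hφ x = some y ↔ φ x = y := by
  rw [pInj_apply]
  simp

lemma pInj_symm_eq_some_iff {φ : ℤ → ℤ} {hφ : Function.Injective φ} {x y : ℤ} :
    (pInj φ hφ).symm y = some x ↔ φ x = y := by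
  rw [PEquiv.eq_some_iff, pInj_eq_some_iff]

lemma ioz_pInj {φ : ℤ → ℤ} (hφ : Function.Injective φ) (hmono : Monotone φ)
    (hran : (Set.range φ)ᶜ.Finite) : IOZ (pInj φ hφ) := by
  refine ⟨?_, ?_, ?_⟩
  · intro x y a b ha hb hxy
    rw [Option.mem_def, pInj_eq_some_iff] at ha hb
    rw [← ha, ← hb]
    exact hmono hxy
  · convert Set.finite_empty
    rw [Set.eq_empty_iff_forall_notMem]
    intro x hx
    exact hx (by simp [PDom, pInj_apply])
  · refine hran.subset ?_
    intro y hy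
    simp only [PRan, Set.mem_compl_iff, Set.mem_setOf_eq, Option.not_isSome_iff_eq_none] at hy ⊢
    rintro ⟨x, rfl⟩
    have h2 : (pInj φ hφ).symm (φ x) = some x := pInj_symm_eq_some_iff.mpr rfl
    rw [hy] at h2
    cases h2

lemma pInj_trans_symm (φ : ℤ → ℤ) (hφ : Function.Injective φ) :
    (pInj φ hφ).trans (pInj φ hφ).symm = PEquiv.refl ℤ := by
  ext x
  rw [trans_apply', pInj_apply, Option.bind_some,
    pInj_symm_eq_some_iff.mpr rfl]
  rfl

lemma pInj_conj_pid (φ : ℤ → ℤ) (hφ : Function.Injective φ) (s : Set ℤ) :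
    ((pInj φ hφ).trans (pid s)).trans (pInj φ hφ).symm = pid (φ ⁻¹' s) := by
  ext x
  rw [trans_apply', trans_apply', pInj_apply, Option.bind_some]
  by_cases h : φ x ∈ s
  · rw [pid_apply_mem h, Option.bind_some, pInj_symm_eq_some_iff.mpr rfl,
      pid_apply_mem (show x ∈ φ ⁻¹' s from h)]
  · rw [pid_apply_not_mem h, Option.bind_none,
      pid_apply_not_mem (show x ∉ φ ⁻¹' s from h)]

end PInj
section Kfun

lemma total_trans_symm {f : ℤ ≃. ℤ} (h : ∀ x, (f x).isSome) :
    f.trans f.symm = PEquiv.refl ℤ := by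
  ext x
  obtain ⟨y, hy⟩ := Option.isSome_iff_exists.mp (h x)
  rw [trans_apply', hy, Option.bind_some, (PEquiv.eq_some_iff f).mpr hy]
  rfl

/-- The piecewise-shift embedding sending `0 ↦ x₀` and everything else out of the
window `[-N, N]`. -/
def kfun (x₀ N : ℤ) : ℤ → ℤ := fun x => if x < 0 then x - N else if x = 0 then x₀ else x + N

lemma kfun_strictMono {x₀ N : ℤ} (h1 : -N ≤ x₀) (h2 : x₀ ≤ N) : StrictMono (kfun x₀ N) := by
  intro x y hxy
  unfold kfun
  split_ifs <;> omega

lemma kfun_zero (x₀ N : ℤ) : kfun x₀ N 0 = x₀ := by simp [kfun]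

lemma kfun_large {x₀ N z : ℤ} (h1 : -N ≤ x₀) (h2 : x₀ ≤ N) (hz : z ≠ 0) :
    kfun x₀ N z < -N ∨ N < kfun x₀ N z := by
  unfold kfun
  split_ifs <;> omega

lemma kfun_range_compl (x₀ N : ℤ) : (Set.range (kfun x₀ N))ᶜ ⊆ Set.Icc (-N) N := by
  intro y hy
  simp only [Set.mem_compl_iff, Set.mem_range, not_exists] at hy
  by_contra hmem
  simp only [Set.mem_Icc, not_and_or, not_le] at hmem
  rcases hmem with h | h
  · exact hy (y + N) (by unfold kfun; split_ifs <;> omega)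
  · exact hy (y - N) (by unfold kfun; split_ifs <;> omega)

lemma ioz_kfun {x₀ N : ℤ} (h1 : -N ≤ x₀) (h2 : x₀ ≤ N) :
    IOZ (pInj (kfun x₀ N) (kfun_strictMono h1 h2).injective) :=
  ioz_pInj _ (kfun_strictMono h1 h2).monotone
    ((Set.finite_Icc (-N) N).subset (kfun_range_compl x₀ N))

lemma exists_none_of_ne {g : ℤ ≃. ℤ} (hmono : PMono g)
    (hfix : {x : ℤ | g x ≠ some x}.Finite) (h0 : g 0 ≠ some 0) : ∃ x, g x = none := by
  by_contra hc
  push_neg at hc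
  obtain ⟨ub, hub⟩ := hfix.bddAbove
  obtain ⟨lb, hlb⟩ := hfix.bddBelow
  set l : ℤ := min lb 0 - 1 with hl
  set r : ℤ := max ub 0 + 1 with hr
  have hfix2 : ∀ x : ℤ, x ≤ l ∨ r ≤ x → g x = some x := by
    intro x hx
    by_contra hgx
    have h1 := hub (Set.mem_setOf_eq ▸ hgx : x ∈ {x : ℤ | g x ≠ some x})
    have h2 := hlb (Set.mem_setOf_eq ▸ hgx : x ∈ {x : ℤ | g x ≠ some x})
    simp only [hl, hr] at hx
    omega
  have hup : ∀ x : ℤ, l ≤ x → ∀ y : ℤ, g x = some y → x ≤ y := by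
    refine Int.le_induction ?_ ?_
    · intro y hy
      rw [hfix2 l (Or.inl le_rfl)] at hy
      simp only [Option.some.injEq] at hy
      omega
    · intro m hm ih y hy
      obtain ⟨w, hw⟩ := Option.ne_none_iff_exists'.mp (hc m)
      have h3 := pmono_strict hmono hw hy (by omega : m < m + 1)
      have h4 := ih w hw
      omega
  have hdown : ∀ x : ℤ, x ≤ r → ∀ y : ℤ, g x = some y → y ≤ x := by
    refine Int.le_induction_down ?_ ?_
    · intro y hy
      rw [hfix2 r (Or.inr le_rfl)] at hy
      simp only [Option.some.injEq] at hy
      omega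
    · intro m hm ih y hy
      obtain ⟨w, hw⟩ := Option.ne_none_iff_exists'.mp (hc m)
      have h3 := pmono_strict hmono hy hw (by omega : m - 1 < m)
      have h4 := ih w hw
      omega
  obtain ⟨y0, hy0⟩ := Option.ne_none_iff_exists'.mp (hc 0)
  have e1 := hup 0 (by omega) y0 hy0
  have e2 := hdown 0 (by omega) y0 hy0
  exact h0 (by rw [hy0]; congr 1; omega)

end Kfun
section Tuple

variable {n : ℕ}

lemma ioz_oneN (n : ℕ) : IOZn n (oneN n) := fun _ => ioz_refl

lemma ioz_epsT (i : Fin n) {ε : ℤ ≃. ℤ} (hε : IOZ ε) : IOZn n (epsT i ε) := by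
  intro j
  unfold epsT
  split_ifs with h
  · exact hε
  · exact ioz_refl

lemma ioz_mulN {α β : Fin n → ℤ ≃. ℤ} (hα : IOZn n α) (hβ : IOZn n β) :
    IOZn n (mulN α β) := fun j => ioz_trans (hα j) (hβ j)

lemma mulN_oneN (α : Fin n → ℤ ≃. ℤ) : mulN α (oneN n) = α :=
  funext fun _ => PEquiv.trans_refl _

lemma oneN_mulN (α : Fin n → ℤ ≃. ℤ) : mulN (oneN n) α = α :=
  funext fun _ => PEquiv.refl_trans _

lemma epsT_trans (i : Fin n) (a b : ℤ ≃. ℤ) :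
    mulN (epsT i a) (epsT i b) = epsT i (a.trans b) := by
  funext j
  unfold mulN epsT
  split_ifs with h
  · rfl
  · exact PEquiv.trans_refl _

lemma epsT_refl (i : Fin n) : epsT i (PEquiv.refl ℤ) = oneN n := by
  funext j
  unfold epsT oneN
  split_ifs <;> rfl

lemma epsT_apply_self (i : Fin n) (ε : ℤ ≃. ℤ) : epsT i ε i = ε := if_pos rfl

/-- Constant tuple. -/
def constN (n : ℕ) (f : ℤ ≃. ℤ) : Fin n → ℤ ≃. ℤ := fun _ => f

lemma ioz_constN {f : ℤ ≃. ℤ} (hf : IOZ f) : IOZn n (constN n f) := fun _ => hf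

section Cong

variable {i : Fin n} {ρ : (Fin n → ℤ ≃. ℤ) → (Fin n → ℤ ≃. ℤ) → Prop}

lemma Mtrans (hρ : IsCongOn n ρ) {m1 m2 : ℤ ≃. ℤ} (hm1 : IOZ m1) (hm2 : IOZ m2)
    (h1 : ρ (oneN n) (epsT i m1)) (h2 : ρ (oneN n) (epsT i m2)) :
    ρ (oneN n) (epsT i (m1.trans m2)) := by
  obtain ⟨hrefl, hsym, htrans, hcompat⟩ := hρ
  have c := (hcompat _ _ (epsT i m2) (ioz_oneN n) (ioz_epsT i hm1) (ioz_epsT i hm2) h1).1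
  rw [oneN_mulN, epsT_trans] at c
  exact htrans _ _ _ (ioz_oneN n) (ioz_epsT i hm2) (ioz_epsT i (ioz_trans hm1 hm2)) h2 c

lemma Mconj (hρ : IsCongOn n ρ) {φ : ℤ → ℤ} (hφ : Function.Injective φ)
    (hk : IOZ (pInj φ hφ)) {m : ℤ ≃. ℤ} (hm : IOZ m)
    (h : ρ (oneN n) (epsT i m)) :
    ρ (oneN n) (epsT i (((pInj φ hφ).trans m).trans (pInj φ hφ).symm)) := by
  obtain ⟨hrefl, hsym, htrans, hcompat⟩ := hρ
  set k := pInj φ hφ with hkdef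
  have hks : IOZ k.symm := ioz_symm hk
  have s1 := (hcompat _ _ (constN n k) (ioz_oneN n) (ioz_epsT i hm) (ioz_constN hk) h).2
  have s2 := (hcompat _ _ (constN n k.symm)
    (ioz_mulN (ioz_constN hk) (ioz_oneN n))
    (ioz_mulN (ioz_constN hk) (ioz_epsT i hm)) (ioz_constN hks) s1).1
  have e1 : mulN (mulN (constN n k) (oneN n)) (constN n k.symm) = oneN n := by
    rw [mulN_oneN]
    funext j
    exact pInj_trans_symm φ hφ
  have e2 : mulN (mulN (constN n k) (epsT i m)) (constN n k.symm)
      = epsT i ((k.trans m).trans k.symm) := by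
    funext j
    show ((k.trans (epsT i m j)).trans k.symm) = epsT i ((k.trans m).trans k.symm) j
    unfold epsT
    split_ifs with h
    · rfl
    · rw [PEquiv.trans_refl]
      exact pInj_trans_symm φ hφ
  rw [e1, e2] at s2
  exact s2

lemma fix_cofinite (hρ : IsCongOn n ρ)
    (hsub : ∀ α β, IOZn n α → IOZn n β → ρ α β → sigmaI n i α β)
    {g : ℤ ≃. ℤ} (hg : IOZ g) (h : ρ (oneN n) (epsT i g)) :
    {x : ℤ | g x ≠ some x}.Finite := by
  obtain ⟨ε, hε, hid, heq⟩ := hsub _ _ (ioz_oneN n) (ioz_epsT i hg) h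
  have heqi : (PEquiv.refl ℤ).trans ε = g.trans ε := by
    have := congrFun heq i
    unfold mulN oneN at this
    rwa [epsT_apply_self, epsT_apply_self] at this
  rw [PEquiv.refl_trans] at heqi
  refine Set.Finite.subset hε.2.1 ?_
  intro x hx
  simp only [Set.mem_setOf_eq] at hx
  simp only [Set.mem_compl_iff, PDom, Set.mem_setOf_eq, Option.not_isSome_iff_eq_none]
  by_contra h'
  obtain ⟨y, hy⟩ := Option.ne_none_iff_exists'.mp h'
  obtain rfl := isIdem_fix hid hy
  have h2 : g.trans ε y = some y := by rw [← heqi]; exact hy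
  rw [PEquiv.trans_eq_some] at h2
  obtain ⟨w, hw1, hw2⟩ := h2
  obtain rfl := isIdem_fix hid hw2
  exact hx hw1

end Cong

end Tuple
section Extract

variable {n : ℕ} {i : Fin n} {ρ : (Fin n → ℤ ≃. ℤ) → (Fin n → ℤ ≃. ℤ) → Prop}

lemma epsT_apply_ne {i j : Fin n} (h : j ≠ i) (ε : ℤ ≃. ℤ) :
    epsT i ε j = PEquiv.refl ℤ := if_neg h

lemma exists_N (t : Set ℤ) (ht : t.Finite) (p : ℤ) :
    ∃ N : ℤ, -N ≤ p ∧ p ≤ N ∧ ∀ z ∈ t, -N ≤ z ∧ z ≤ N := by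
  obtain ⟨ub, hub⟩ := ht.bddAbove
  obtain ⟨lb, hlb⟩ := ht.bddBelow
  refine ⟨max (max ub (-lb)) (max p (-p)), by omega, by omega, fun z hz => ?_⟩
  have h1 := hub hz
  have h2 := hlb hz
  omega

lemma agree_off_i (hsub : ∀ α β, IOZn n α → IOZn n β → ρ α β → sigmaI n i α β)
    {α β : Fin n → ℤ ≃. ℤ} (hα : IOZn n α) (hβ : IOZn n β) (hab : ρ α β) :
    ∀ j, j ≠ i → α j = β j := by
  obtain ⟨ε, hε, hid, heq⟩ := hsub α β hα hβ hab
  intro j hj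
  have h := congrFun heq j
  unfold mulN at h
  rwa [epsT_apply_ne hj, PEquiv.trans_refl, PEquiv.trans_refl] at h

lemma extract_g (hρ : IsCongOn n ρ)
    (hsub : ∀ α β, IOZn n α → IOZn n β → ρ α β → sigmaI n i α β)
    {α β : Fin n → ℤ ≃. ℤ} (hα : IOZn n α) (hβ : IOZn n β) (hab : ρ α β)
    {x₀ y₀ : ℤ} (hx₀ : α i x₀ = some y₀) (hne : α i x₀ ≠ β i x₀) :
    ∃ g : ℤ ≃. ℤ, IOZ g ∧ ρ (oneN n) (epsT i g) ∧ g 0 ≠ some 0 := by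
  have hagree : ∀ j, j ≠ i → α j = β j := agree_off_i hsub hα hβ hab
  -- choose base points
  have hpts : ∀ j, ∃ pj, pj ∈ PDom (α j) ∧ (j = i → pj = x₀) := by
    intro j
    by_cases hj : j = i
    · subst hj
      exact ⟨x₀, by simp [PDom, hx₀], fun _ => rfl⟩
    · have hinf : (PDom (α j)).Infinite := by
        have := (hα j).2.1.infinite_compl
        rwa [compl_compl] at this
      obtain ⟨pj, hpj⟩ := hinf.nonempty
      exact ⟨pj, hpj, fun h => absurd h hj⟩
  choose p hp1 hp2 using hpts
  choose N hN1 hN2 hN3 using fun j => exists_N _ ((hα j).2.1) (p j)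
  have hφinj : ∀ j, Function.Injective (kfun (p j) (N j)) :=
    fun j => (kfun_strictMono (hN1 j) (hN2 j)).injective
  set v : Fin n → ℤ ≃. ℤ := fun j => pInj (kfun (p j) (N j)) (hφinj j) with hv
  have hvioz : IOZn n v := fun j => ioz_kfun (hN1 j) (hN2 j)
  have hranv : ∀ j z, kfun (p j) (N j) z ∈ PDom (α j) := by
    intro j z
    by_cases hz : z = 0
    · rw [hz, kfun_zero]
      exact hp1 j
    · have hl := kfun_large (hN1 j) (hN2 j) hz
      by_contra hmem
      have := hN3 j _ hmem
      omega
  set c : Fin n → ℤ ≃. ℤ := fun j => (v j).trans (α j) with hc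
  have hctotal : ∀ j z, (c j z).isSome := by
    intro j z
    have h1 : c j z = (α j) (kfun (p j) (N j) z) := by
      rw [hc]
      simp only
      rw [trans_apply', pInj_apply, Option.bind_some]
    rw [h1]
    exact hranv j z
  set u : Fin n → ℤ ≃. ℤ := fun j => (c j).symm with hu
  have hcioz : ∀ j, IOZ (c j) := fun j => ioz_trans (hvioz j) (hα j)
  have huioz : IOZn n u := fun j => ioz_symm (hcioz j)
  have hcu : ∀ j, (c j).trans (u j) = PEquiv.refl ℤ := fun j => total_trans_symm (hctotal j)
  obtain ⟨hrefl, hsym, htrans, hcompat⟩ := hρ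
  have s1 := (hcompat α β v hα hβ hvioz hab).2
  have s2 := (hcompat _ _ u (ioz_mulN hvioz hα) (ioz_mulN hvioz hβ) huioz s1).1
  set g : ℤ ≃. ℤ := ((v i).trans (β i)).trans (u i) with hg
  have e1 : mulN (mulN v α) u = oneN n := funext fun j => hcu j
  have e2 : mulN (mulN v β) u = epsT i g := by
    funext j
    by_cases hj : j = i
    · subst hj
      rw [epsT_apply_self]
      rfl
    · rw [epsT_apply_ne hj]
      show ((v j).trans (β j)).trans (u j) = PEquiv.refl ℤ
      rw [← hagree j hj]
      exact hcu j
  rw [e1, e2] at s2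
  refine ⟨g, ioz_trans (ioz_trans (hvioz i) (hβ i)) (huioz i), s2, ?_⟩
  -- g 0 ≠ some 0
  intro hg0
  have hv0 : v i 0 = some x₀ := by
    rw [hv]
    simp only
    rw [pInj_apply, kfun_zero, hp2 i rfl]
  have hgeq : g 0 = ((β i) x₀).bind (u i) := by
    rw [hg]
    show (((v i).trans (β i)) 0).bind (u i) = _
    rw [trans_apply', hv0, Option.bind_some]
  rw [hgeq, Option.bind_eq_some_iff] at hg0
  obtain ⟨w, hw1, hw2⟩ := hg0
  have hci0 : c i 0 = some y₀ := by
    rw [hc]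
    simp only
    rw [trans_apply', hv0, Option.bind_some]
    exact hx₀
  have hw3 : c i 0 = some w := (PEquiv.eq_some_iff (c i)).mp hw2
  rw [hci0] at hw3
  obtain rfl := Option.some_injective _ hw3
  exact hne (hx₀.trans hw1.symm)

end Extract
section Key

variable {n : ℕ} {i : Fin n} {ρ : (Fin n → ℤ ≃. ℤ) → (Fin n → ℤ ≃. ℤ) → Prop}

lemma key_idem (hρ : IsCongOn n ρ)
    (hsub : ∀ α β, IOZn n α → IOZn n β → ρ α β → sigmaI n i α β)
    {α β : Fin n → ℤ ≃. ℤ} (hα : IOZn n α) (hβ : IOZn n β) (hab : ρ α β)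
    (hne : α ≠ β) :
    ∀ ε : ℤ ≃. ℤ, IOZ ε → IsIdem ε → ρ (oneN n) (epsT i ε) := by
  -- Step 1: find a coordinate-i disagreement point
  have hagree : ∀ j, j ≠ i → α j = β j := agree_off_i hsub hα hβ hab
  have hnei : α i ≠ β i := by
    intro h
    apply hne
    funext j
    by_cases hj : j = i
    · rw [hj, h]
    · exact hagree j hj
  have hx : ∃ x₀, α i x₀ ≠ β i x₀ := by
    by_contra hcon
    push_neg at hcon
    exact hnei (PEquiv.ext hcon)
  obtain ⟨x₀, hx₀⟩ := hx
  -- Step 2: get g with ρ 𝕀 (epsT i g) and g 0 ≠ some 0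
  have hgex : ∃ g : ℤ ≃. ℤ, IOZ g ∧ ρ (oneN n) (epsT i g) ∧ g 0 ≠ some 0 := by
    cases hval : (α i) x₀ with
    | some y₀ => exact extract_g hρ hsub hα hβ hab hval hx₀
    | none =>
      cases hval' : (β i) x₀ with
      | none => rw [hval, hval'] at hx₀; exact absurd rfl hx₀
      | some y₀ =>
        exact extract_g hρ hsub hβ hα (hρ.2.1 α β hα hβ hab) hval'
          (fun h => hx₀ h.symm)
  obtain ⟨g, hg, hrel, h0⟩ := hgex
  have hfix : {x : ℤ | g x ≠ some x}.Finite := fix_cofinite hρ hsub hg hrel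
  obtain ⟨x₁, hx₁⟩ := exists_none_of_ne hg.1 hfix h0
  -- Step 3: conjugate to get pid {z | z ≠ 0}
  obtain ⟨N, hN1, hN2, hN3⟩ := exists_N _ hfix x₁
  have hφinj := (kfun_strictMono hN1 hN2).injective
  have hconj := Mconj hρ hφinj (ioz_kfun hN1 hN2) hg hrel
  have he : ((pInj (kfun x₁ N) hφinj).trans g).trans (pInj (kfun x₁ N) hφinj).symm
      = pid {z : ℤ | z ≠ 0} := by
    ext z
    rw [trans_apply', trans_apply', pInj_apply, Option.bind_some]
    by_cases hz : z = 0
    · subst hz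
      rw [kfun_zero, hx₁, Option.bind_none, pid_apply_not_mem (by simp)]
    · have hlarge := kfun_large hN1 hN2 hz
      have hfixz : g (kfun x₁ N z) = some (kfun x₁ N z) := by
        by_contra hcc
        have := hN3 _ hcc
        omega
      rw [hfixz, Option.bind_some, pInj_symm_eq_some_iff.mpr rfl,
        pid_apply_mem (show z ∈ {z : ℤ | z ≠ 0} from hz)]
  rw [he] at hconj
  -- Step 4: all single-point deletions
  have hpid0 : ({z : ℤ | z ≠ 0}ᶜ : Set ℤ).Finite := by
    refine Set.Finite.subset (Set.finite_singleton 0) ?_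
    intro z hz
    simp only [Set.mem_compl_iff, Set.mem_setOf_eq, not_not] at hz
    simp [hz]
  have hpoint : ∀ q : ℤ, ρ (oneN n) (epsT i (pid {z : ℤ | z ≠ q})) := by
    intro q
    have hinj : Function.Injective (fun z : ℤ => z - q) := fun a b h => by
      simpa using h
    have hmono : Monotone (fun z : ℤ => z - q) := fun a b h => by simpa using h
    have hsurj : (Set.range (fun z : ℤ => z - q))ᶜ.Finite := by
      convert Set.finite_empty
      rw [Set.eq_empty_iff_forall_notMem]
      intro y hy
      exact hy ⟨y + q, by show y + q - q = y; omega⟩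
    have h2 := Mconj hρ hinj (ioz_pInj hinj hmono hsurj) (ioz_pid hpid0) hconj
    rw [pInj_conj_pid] at h2
    have : (fun z : ℤ => z - q) ⁻¹' {z : ℤ | z ≠ 0} = {z : ℤ | z ≠ q} := by
      ext z
      simp only [Set.mem_preimage, Set.mem_setOf_eq]
      omega
    rwa [this] at h2
  -- Step 5: all finite deletions
  have hpidB : ∀ B : Finset ℤ, ({z : ℤ | z ∉ B}ᶜ : Set ℤ).Finite := by
    intro B
    refine Set.Finite.subset B.finite_toSet ?_
    intro z hz
    simpa using hz
  have hfinset : ∀ B : Finset ℤ, ρ (oneN n) (epsT i (pid {z : ℤ | z ∉ B})) := by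
    intro B
    induction B using Finset.induction_on with
    | empty =>
      have h3 : {z : ℤ | z ∉ (∅ : Finset ℤ)} = Set.univ := by simp
      rw [h3, pid_univ, epsT_refl]
      exact hρ.1 _ (ioz_oneN n)
    | @insert q B hq ih =>
      have hpq : ({z : ℤ | z ≠ q}ᶜ : Set ℤ).Finite := by
        refine Set.Finite.subset (Set.finite_singleton q) ?_
        intro z hz
        simp only [Set.mem_compl_iff, Set.mem_setOf_eq, not_not] at hz
        simp [hz]
      have h4 := Mtrans hρ (ioz_pid (hpidB B)) (ioz_pid hpq) ih (hpoint q)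
      rw [pid_trans_pid] at h4
      have h5 : {z : ℤ | z ∉ B} ∩ {z : ℤ | z ≠ q} = {z : ℤ | z ∉ insert q B} := by
        ext z
        simp only [Set.mem_inter_iff, Set.mem_setOf_eq, Finset.mem_insert]
        tauto
      rwa [h5] at h4
  -- Step 6: arbitrary idempotent
  intro ε hε hid
  have hcof : (PDom ε)ᶜ.Finite := hε.2.1
  have h6 := hfinset hcof.toFinset
  have h7 : {z : ℤ | z ∉ hcof.toFinset} = PDom ε := by
    ext z
    simp [Set.Finite.mem_toFinset]
  rw [h7, ← isIdem_eq_pid hid] at h6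
  exact h6

end Key
/-- any congruence between the identity congruence Δ and σ_[i] equals
one of them (σ_[i] covers Δ). -/
theorem stmt16 (n : ℕ) (i : Fin n) (ρ : (Fin n → ℤ ≃. ℤ) → (Fin n → ℤ ≃. ℤ) → Prop)
    (hρ : IsCongOn n ρ)
    (hsub : ∀ α β, IOZn n α → IOZn n β → ρ α β → sigmaI n i α β) :
    (∀ α β, IOZn n α → IOZn n β → (ρ α β ↔ α = β)) ∨
    (∀ α β, IOZn n α → IOZn n β → (ρ α β ↔ sigmaI n i α β)) := by
  by_cases htriv : ∀ α β, IOZn n α → IOZn n β → ρ α β → α = β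
  · left
    intro α β hα hβ
    refine ⟨htriv α β hα hβ, ?_⟩
    rintro rfl
    exact hρ.1 α hα
  · right
    push_neg at htriv
    obtain ⟨α, β, hα, hβ, hab, hne⟩ := htriv
    have key := key_idem hρ hsub hα hβ hab hne
    intro γ δ hγ hδ
    refine ⟨hsub γ δ hγ hδ, ?_⟩
    rintro ⟨ε, hε, hid, heq⟩
    have hεT : IOZn n (epsT i ε) := ioz_epsT i hε
    have h1 := (hρ.2.2.2 (oneN n) (epsT i ε) γ (ioz_oneN n) hεT hγ (key ε hε hid)).2
    have h2 := (hρ.2.2.2 (oneN n) (epsT i ε) δ (ioz_oneN n) hεT hδ (key ε hε hid)).2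
    rw [mulN_oneN] at h1 h2
    -- h1 : ρ γ (mulN γ (epsT i ε)), h2 : ρ δ (mulN δ (epsT i ε))
    have hγε : IOZn n (mulN γ (epsT i ε)) := ioz_mulN hγ hεT
    have hδε : IOZn n (mulN δ (epsT i ε)) := ioz_mulN hδ hεT
    rw [heq] at h1
    -- h1 : ρ γ (mulN δ (epsT i ε))
    have h2' := hρ.2.1 _ _ hδ hδε h2
    exact hρ.2.2.1 γ _ δ hγ (heq ▸ hδε) hδ h1 h2'
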